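/- Let ρ ≥ 0 be a trace-class self-adjoint operator on a separable Hilbert space H and X a self-adjoint operator with tr(XρX) < ∞. Then there exists a sequence (X_m) of finite-rank self-adjoint operators on H such that tr((X − X_m) ρ (X − X_m)) → 0 as m → ∞. -/

import Mathlib

open scoped InnerProductSpace
open Filter

set_option maxHeartbeats 1000000

/-- Let `ρ ≥ 0` be trace class self-adjoint on a separable Hilbert
space, given by its spectral decomposition `ρ = ∑ j, s j • |φ j⟩⟨φ j|`, and `X`
self-adjoint with `tr(XρX) = ∑' j, s j * ‖X (φ j)‖² < ∞`.  Then there is a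
sequence `Xₘ` of finite-rank self-adjoint operators with
`tr((X − Xₘ) ρ (X − Xₘ)) → 0`. -/
theorem stmt6 {H : Type*} [NormedAddCommGroup H] [InnerProductSpace ℂ H]
    [CompleteSpace H] [TopologicalSpace.SeparableSpace H]
    (s : ℕ → ℝ) (hs : ∀ j, 0 ≤ s j) (hsum : Summable s)
    (φ : ℕ → H) (hφ : Orthonormal ℂ φ)
    (ρ X : H →L[ℂ] H) (hρsa : IsSelfAdjoint ρ)
    (hρdef : ∀ x : H, ρ x = ∑' j, (s j : ℂ) • (⟪φ j, x⟫_ℂ • φ j))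
    (hX : IsSelfAdjoint X)
    (hfin : Summable (fun j => s j * ‖X (φ j)‖ ^ 2)) :
    ∃ Xm : ℕ → H →L[ℂ] H,
      (∀ m, IsSelfAdjoint (Xm m)) ∧
      (∀ m, FiniteDimensional ℂ (LinearMap.range ((Xm m : H →ₗ[ℂ] H)))) ∧
      Tendsto (fun m => ∑' j, s j * ‖(X - Xm m) (φ j)‖ ^ 2) atTop (nhds 0) := by
  classical
  -- the finite-dimensional subspace spanned by `φ j` and `X (φ j)` for `j < m`
  set U : ℕ → Submodule ℂ H := fun m =>
    Submodule.span ℂ ((φ '' Set.Iio m) ∪ ((X ∘ φ) '' Set.Iio m)) with hU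
  have hUfin : ∀ m, FiniteDimensional ℂ (U m) := by
    intro m
    apply FiniteDimensional.span_of_finite
    exact ((Set.finite_Iio m).image φ).union ((Set.finite_Iio m).image (X ∘ φ))
  have hUcomplete : ∀ m, CompleteSpace (U m) := fun m =>
    haveI := hUfin m
    FiniteDimensional.complete ℂ (U m)
  -- the orthogonal projection onto `U m` as an operator on `H`
  set P : ℕ → H →L[ℂ] H := fun m =>
    haveI := hUcomplete m
    (U m).subtypeL ∘L (U m).orthogonalProjectionOnto with hP
  set Xm : ℕ → H →L[ℂ] H := fun m => (P m) ∘L X ∘L (P m) with hXm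
  have hPmem : ∀ m x, P m x ∈ U m := by
    intro m x
    haveI := hUcomplete m
    simp [hP]
  have hPfix : ∀ m x, x ∈ U m → P m x = x := by
    intro m x hx
    haveI := hUcomplete m
    simpa [hP] using (Submodule.starProjection_eq_self_iff (K := U m)).2 hx
  have hPnorm : ∀ m x, ‖P m x‖ ≤ ‖x‖ := by
    intro m x
    haveI := hUcomplete m
    calc ‖P m x‖ = ‖(U m).orthogonalProjectionOnto x‖ := rfl
      _ ≤ ‖(U m).orthogonalProjectionOnto‖ * ‖x‖ := ((U m).orthogonalProjectionOnto).le_opNorm x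
      _ ≤ 1 * ‖x‖ :=
          mul_le_mul_of_nonneg_right (Submodule.orthogonalProjectionOnto_norm_le _) (norm_nonneg x)
      _ = ‖x‖ := one_mul _
  refine ⟨Xm, ?_, ?_, ?_⟩
  · -- self-adjointness
    intro m
    haveI := hUcomplete m
    have := hX.conj_starProjection (U m)
    simpa [hXm, hP, Submodule.starProjection, ContinuousLinearMap.comp_assoc] using this
  · -- finite rank
    intro m
    haveI := hUfin m
    have hle : LinearMap.range ((Xm m : H →ₗ[ℂ] H)) ≤ U m := by
      rintro x ⟨y, rfl⟩
      exact hPmem m _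
    exact Submodule.finiteDimensional_of_le hle
  · -- convergence
    -- key: for `j < m`, `(X - Xm m) (φ j) = 0`
    have hzero : ∀ m j, j < m → (X - Xm m) (φ j) = 0 := by
      intro m j hj
      have h1 : φ j ∈ U m :=
        Submodule.subset_span (Set.mem_union_left _ ⟨j, hj, rfl⟩)
      have h2 : X (φ j) ∈ U m :=
        Submodule.subset_span (Set.mem_union_right _ ⟨j, hj, rfl⟩)
      simp [hXm, ContinuousLinearMap.sub_apply, hPfix m _ h1, hPfix m _ h2]
    -- uniform bound on each term
    have hbound : ∀ m j, s j * ‖(X - Xm m) (φ j)‖ ^ 2 ≤ s j * (2 * ‖X‖) ^ 2 := by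
      intro m j
      have hφ1 : ‖φ j‖ = 1 := hφ.1 j
      have h1 : ‖X (φ j)‖ ≤ ‖X‖ := by
        simpa [hφ1] using X.le_opNorm (φ j)
      have h2 : ‖Xm m (φ j)‖ ≤ ‖X‖ := by
        calc ‖Xm m (φ j)‖ = ‖P m (X (P m (φ j)))‖ := rfl
          _ ≤ ‖X (P m (φ j))‖ := hPnorm m _
          _ ≤ ‖X‖ * ‖P m (φ j)‖ := X.le_opNorm _
          _ ≤ ‖X‖ * ‖φ j‖ := by
              exact mul_le_mul_of_nonneg_left (hPnorm m _) (norm_nonneg X)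
          _ = ‖X‖ := by rw [hφ1, mul_one]
      have h3 : ‖(X - Xm m) (φ j)‖ ≤ 2 * ‖X‖ := by
        calc ‖(X - Xm m) (φ j)‖ = ‖X (φ j) - Xm m (φ j)‖ := rfl
          _ ≤ ‖X (φ j)‖ + ‖Xm m (φ j)‖ := norm_sub_le _ _
          _ ≤ 2 * ‖X‖ := by linarith
      have h4 : ‖(X - Xm m) (φ j)‖ ^ 2 ≤ (2 * ‖X‖) ^ 2 := by
        have := norm_nonneg ((X - Xm m) (φ j))
        nlinarith
      exact mul_le_mul_of_nonneg_left h4 (hs j)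
    set C : ℝ := (2 * ‖X‖) ^ 2 with hC
    have hC0 : 0 ≤ C := sq_nonneg _
    have hsummable : ∀ m, Summable (fun j => s j * ‖(X - Xm m) (φ j)‖ ^ 2) := by
      intro m
      apply Summable.of_nonneg_of_le
      · intro j; exact mul_nonneg (hs j) (sq_nonneg _)
      · intro j; exact hbound m j
      · exact hsum.mul_right C |>.congr fun j => rfl
    -- squeeze between 0 and C * tail
    have hle : ∀ m, ∑' j, s j * ‖(X - Xm m) (φ j)‖ ^ 2 ≤ C * ∑' j, s (j + m) := by
      intro m
      have hsm : Summable (fun j => s (j + m)) := (summable_nat_add_iff m).2 hsum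
      have hsum2 : Summable (fun j => s j * ‖(X - Xm m) (φ j)‖ ^ 2) := hsummable m
      rw [← Summable.sum_add_tsum_nat_add m hsum2]
      have hz : ∑ j ∈ Finset.range m, s j * ‖(X - Xm m) (φ j)‖ ^ 2 = 0 := by
        apply Finset.sum_eq_zero
        intro j hj
        rw [hzero m j (Finset.mem_range.1 hj)]
        simp
      rw [hz, zero_add, ← tsum_mul_left]
      apply Summable.tsum_le_tsum
      · intro j
        calc s (j + m) * ‖(X - Xm m) (φ (j + m))‖ ^ 2 ≤ s (j + m) * C := hbound m (j + m)
          _ = C * s (j + m) := mul_comm _ _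
      · exact (summable_nat_add_iff m).2 hsum2
      · exact hsm.mul_left C
    have hge : ∀ m, 0 ≤ ∑' j, s j * ‖(X - Xm m) (φ j)‖ ^ 2 := by
      intro m
      apply tsum_nonneg
      intro j; exact mul_nonneg (hs j) (sq_nonneg _)
    have htail : Tendsto (fun m => C * ∑' j, s (j + m)) atTop (nhds 0) := by
      have := tendsto_sum_nat_add s
      simpa using (this.const_mul C).congr fun m => rfl
    exact tendsto_of_tendsto_of_tendsto_of_le_of_le tendsto_const_nhds htail hge hle
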